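/- Suppose there are constants C > 0 and 0 < ρ < 1 such that |corr(Y_i, Y_{i+m})| ≤ C m^{−ρ} for all 1 ≤ i ≤ n − m and all m ≥ 1, and let σ² be a constant with E[Y_i²] ≤ σ² for all i. Then there exists a constant D(ρ) > 0, depending only on ρ and C, such that E[(max_{1≤k≤n} |Σ_{i=1}^k (Y_i − E[Y_i])|)²] ≤ D(ρ)² σ² n^{2−ρ}. -/

import Mathlib

open MeasureTheory Filter

set_option maxHeartbeats 1000000

section Aux

variable {Ω : Type*} [MeasurableSpace Ω] {ℙ : Measure Ω}

lemma aux_integrable_mul {f g : Ω → ℝ} (hfm : AEStronglyMeasurable f ℙ)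
    (hgm : AEStronglyMeasurable g ℙ) (hf2 : Integrable (fun ω => f ω ^ 2) ℙ)
    (hg2 : Integrable (fun ω => g ω ^ 2) ℙ) :
    Integrable (fun ω => f ω * g ω) ℙ := by
  have hint : Integrable (fun ω => (1/2 : ℝ) * (f ω ^ 2 + g ω ^ 2)) ℙ :=
    (hf2.add hg2).const_mul _
  refine hint.mono' (hfm.mul hgm) (Eventually.of_forall fun ω => ?_)
  simp only [Real.norm_eq_abs, abs_mul]
  nlinarith [sq_nonneg (|f ω| - |g ω|), sq_abs (f ω), sq_abs (g ω)]

lemma aux_cs {f g : Ω → ℝ} (hfm : AEStronglyMeasurable f ℙ)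
    (hgm : AEStronglyMeasurable g ℙ) (hf2 : Integrable (fun ω => f ω ^ 2) ℙ)
    (hg2 : Integrable (fun ω => g ω ^ 2) ℙ) :
    ∫ ω, f ω * g ω ∂ℙ ≤ Real.sqrt (∫ ω, f ω ^ 2 ∂ℙ) * Real.sqrt (∫ ω, g ω ^ 2 ∂ℙ) := by
  have hmul := aux_integrable_mul hfm hgm hf2 hg2
  set a := ∫ ω, f ω ^ 2 ∂ℙ with ha'
  set c := ∫ ω, g ω ^ 2 ∂ℙ with hc'
  set b := ∫ ω, f ω * g ω ∂ℙ with hb'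
  have ha : 0 ≤ a := integral_nonneg fun ω => sq_nonneg _
  have hc : 0 ≤ c := integral_nonneg fun ω => sq_nonneg _
  have key : discrim a (2 * b) c ≤ 0 := by
    apply discrim_le_zero
    intro t
    have i1 : Integrable (fun ω => t ^ 2 * f ω ^ 2) ℙ := hf2.const_mul _
    have i2 : Integrable (fun ω => (2 * t) * (f ω * g ω)) ℙ := hmul.const_mul _
    have i3 : Integrable (fun ω => (2 * t) * (f ω * g ω) + g ω ^ 2) ℙ := i2.add hg2
    have h2 : (fun ω => (t * f ω + g ω) ^ 2)
        = fun ω => t ^ 2 * f ω ^ 2 + ((2 * t) * (f ω * g ω) + g ω ^ 2) := by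
      funext ω; ring
    have h3 : 0 ≤ ∫ ω, (t * f ω + g ω) ^ 2 ∂ℙ := integral_nonneg fun ω => sq_nonneg _
    rw [h2, integral_add i1 i3, integral_add i2 hg2, integral_const_mul,
        integral_const_mul] at h3
    nlinarith [h3]
  rw [discrim] at key
  have hb2 : b ^ 2 ≤ a * c := by nlinarith
  calc b ≤ |b| := le_abs_self b
    _ = Real.sqrt (b ^ 2) := (Real.sqrt_sq_eq_abs b).symm
    _ ≤ Real.sqrt (a * c) := Real.sqrt_le_sqrt hb2
    _ = Real.sqrt a * Real.sqrt c := Real.sqrt_mul ha c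

lemma aux_memℒp_sup' {ι : Type*} {s : Finset ι} (hs : s.Nonempty) {f : ι → Ω → ℝ}
    {p : ENNReal} (hf : ∀ i ∈ s, MemLp (f i) p ℙ) :
    MemLp (fun ω => s.sup' hs fun i => f i ω) p ℙ := by
  induction hs using Finset.Nonempty.cons_induction with
  | singleton a => simpa using hf a (by simp)
  | cons a s ha hs ih =>
      have h1 : (fun ω => (Finset.cons a s ha).sup' (Finset.cons_nonempty ha) fun i => f i ω)
          = fun ω => (f a ω) ⊔ (s.sup' hs fun i => f i ω) := by
        funext ω; exact Finset.sup'_cons hs (fun i => f i ω)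
      rw [h1]
      exact (hf a (by simp)).sup (ih fun i hi => hf i (by simp [hi]))

lemma aux_sum_rpow {ρ : ℝ} (hρ0 : 0 < ρ) (hρ1 : ρ < 1) (L : ℕ) (hL : 1 ≤ L) :
    ∑ m ∈ Finset.Icc 1 L, (m : ℝ) ^ (-ρ) ≤ 2 * (L : ℝ) ^ (1 - ρ) / (1 - ρ) := by
  have hL' : (1 : ℝ) ≤ (L : ℝ) := by exact_mod_cast hL
  have h1ρ : 0 < 1 - ρ := by linarith
  have hW : (1 : ℝ) ≤ (L : ℝ) ^ (1 - ρ) := Real.one_le_rpow hL' h1ρ.le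
  have hsplit : ∑ m ∈ Finset.Icc 1 L, (m : ℝ) ^ (-ρ)
      = 1 + ∑ m ∈ Finset.Ioc 1 L, (m : ℝ) ^ (-ρ) := by
    have h0 : Finset.Icc 1 L = Finset.Ioc 0 L := by
      ext x; simp only [Finset.mem_Icc, Finset.mem_Ioc]; omega
    rw [h0, ← Finset.sum_Ioc_consecutive (fun m : ℕ => (m : ℝ) ^ (-ρ)) (by omega : 0 ≤ 1) hL]
    have h01 : Finset.Ioc 0 1 = {1} := by
      ext x; simp only [Finset.mem_Ioc, Finset.mem_singleton]; omega
    simp [h01]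
  have hint : ∑ m ∈ Finset.Ioc 1 L, (m : ℝ) ^ (-ρ) ≤ ((L:ℝ) ^ (1 - ρ) - 1) / (1 - ρ) := by
    have hanti : AntitoneOn (fun x : ℝ => x ^ (-ρ)) (Set.Icc (1:ℝ) (1 + (L - 1 : ℕ))) := by
      intro x hx y hy hxy
      exact Real.rpow_le_rpow_of_nonpos (lt_of_lt_of_le one_pos hx.1) hxy (by linarith)
    have h2 := hanti.sum_le_integral
    have hreindex : ∑ m ∈ Finset.Ioc 1 L, (m : ℝ) ^ (-ρ)
        = ∑ i ∈ Finset.range (L - 1), ((1:ℝ) + ((i + 1 : ℕ) : ℝ)) ^ (-ρ) := by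
      have h1 : Finset.Ioc 1 L = Finset.Ico 2 (L + 1) := by
        ext x; simp only [Finset.mem_Ioc, Finset.mem_Ico]; omega
      rw [h1, Finset.sum_Ico_eq_sum_range]
      have hcard : L + 1 - 2 = L - 1 := by omega
      rw [hcard]
      refine Finset.sum_congr rfl fun i _ => ?_
      congr 1
      push_cast
      ring
    have hval : ∫ x in (1:ℝ)..(1 + (L - 1 : ℕ)), x ^ (-ρ)
        = ((L:ℝ) ^ (1 - ρ) - 1) / (1 - ρ) := by
      have hLcast : (1 : ℝ) + ((L - 1 : ℕ) : ℝ) = (L : ℝ) := by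
        have h3 : ((L - 1 : ℕ) : ℝ) = (L : ℝ) - 1 := by
          push_cast [Nat.cast_sub hL]; ring
        rw [h3]; ring
      rw [hLcast, integral_rpow (Or.inl (by linarith : (-1:ℝ) < -ρ))]
      rw [Real.one_rpow]
      ring_nf
    rw [hreindex, ← hval]
    exact h2
  rw [hsplit]
  have h1 : (1:ℝ) ≤ (L:ℝ) ^ (1 - ρ) / (1 - ρ) := by
    rw [le_div_iff₀ h1ρ]; nlinarith
  have h2 : ((L:ℝ) ^ (1 - ρ) - 1) / (1 - ρ) ≤ (L:ℝ) ^ (1 - ρ) / (1 - ρ) := by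
    gcongr <;> linarith
  have h3 : 2 * (L:ℝ) ^ (1 - ρ) / (1 - ρ)
      = (L:ℝ) ^ (1 - ρ) / (1 - ρ) + (L:ℝ) ^ (1 - ρ) / (1 - ρ) := by ring
  linarith

end Aux

lemma seg_bound {Ω : Type*} [MeasurableSpace Ω] (ℙ : Measure Ω) [IsProbabilityMeasure ℙ]
    (C ρ σsq : ℝ) (hC : 0 < C) (hρ0 : 0 < ρ) (hρ1 : ρ < 1) (hσ0 : 0 ≤ σsq)
    (n : ℕ) (X : ℕ → Ω → ℝ) (hXm : ∀ i, Measurable (X i))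
    (hX2 : ∀ i, Integrable (fun ω => X i ω ^ 2) ℙ)
    (hvar : ∀ i, 1 ≤ i → i ≤ n → ∫ ω, X i ω ^ 2 ∂ℙ ≤ σsq)
    (hcv : ∀ i j, 1 ≤ i → i < j → j ≤ n →
      |∫ ω, X i ω * X j ω ∂ℙ| ≤ C * σsq * ((j - i : ℕ) : ℝ) ^ (-ρ)) :
    ∀ a b, a < b → b ≤ n →
      ∫ ω, (∑ i ∈ Finset.Ioc a b, X i ω) ^ 2 ∂ℙ ≤
        (1 + 4 * C / (1 - ρ)) * σsq * ((b - a : ℕ) : ℝ) ^ ((2:ℝ) - ρ) := by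
  intro a b hab hbn
  have h1ρ : 0 < 1 - ρ := by linarith
  set I := Finset.Ioc a b with hI
  set L := b - a with hLdef
  have hIcard : I.card = L := Nat.card_Ioc a b
  have hL1 : 1 ≤ L := by omega
  have hL1' : (1 : ℝ) ≤ (L : ℝ) := by exact_mod_cast hL1
  have hLpos : (0 : ℝ) < (L : ℝ) := by linarith
  have hmul : ∀ i j, Integrable (fun ω => X i ω * X j ω) ℙ := fun i j =>
    aux_integrable_mul (hXm i).aestronglyMeasurable (hXm j).aestronglyMeasurable
      (hX2 i) (hX2 j)
  have hexp : ∫ ω, (∑ i ∈ I, X i ω) ^ 2 ∂ℙ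
      = ∑ i ∈ I, ∑ j ∈ I, ∫ ω, X i ω * X j ω ∂ℙ := by
    have h1 : (fun ω => (∑ i ∈ I, X i ω) ^ 2)
        = fun ω => ∑ i ∈ I, ∑ j ∈ I, X i ω * X j ω := by
      funext ω; rw [sq, Finset.sum_mul_sum]
    rw [h1, integral_finset_sum I (fun i _ => integrable_finset_sum I fun j _ => hmul i j)]
    exact Finset.sum_congr rfl fun i _ => integral_finset_sum I fun j _ => hmul i j
  have hmem : ∀ i ∈ I, a + 1 ≤ i ∧ i ≤ b := by
    intro i hi; rw [hI, Finset.mem_Ioc] at hi; omega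
  have hterm : ∀ i ∈ I, ∀ j ∈ I, ∫ ω, X i ω * X j ω ∂ℙ ≤
      (if i = j then σsq else C * σsq * ((max i j - min i j : ℕ) : ℝ) ^ (-ρ)) := by
    intro i hi j hj
    obtain ⟨hi1, hin⟩ := hmem i hi
    obtain ⟨hj1, hjn⟩ := hmem j hj
    by_cases hij : i = j
    · subst hij
      rw [if_pos rfl]
      have h2 : (fun ω => X i ω * X i ω) = fun ω => X i ω ^ 2 := by
        funext ω; ring
      rw [h2]
      exact hvar i (by omega) (by omega)
    · rw [if_neg hij]
      rcases lt_or_gt_of_ne hij with h | h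
      · have hb' := hcv i j (by omega) h (by omega)
        have heq : max i j - min i j = j - i := by omega
        rw [heq]
        exact (le_abs_self _).trans hb'
      · have hb' := hcv j i (by omega) h (by omega)
        have heq : max i j - min i j = i - j := by omega
        have hcomm : ∫ ω, X i ω * X j ω ∂ℙ = ∫ ω, X j ω * X i ω ∂ℙ := by
          congr 1; funext ω; ring
        rw [heq, hcomm]
        exact (le_abs_self _).trans hb'
  have hSB : ∑ m ∈ Finset.Icc 1 L, (m : ℝ) ^ (-ρ) ≤ 2 * (L : ℝ) ^ (1 - ρ) / (1 - ρ) :=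
    aux_sum_rpow hρ0 hρ1 L hL1
  have hmaple : ∀ (s : Finset ℕ) (φ : ℕ → ℕ), (∀ x ∈ s, ∀ y ∈ s, φ x = φ y → x = y) →
      (∀ j ∈ s, φ j ∈ Finset.Icc 1 L) →
      ∑ j ∈ s, ((φ j : ℕ) : ℝ) ^ (-ρ) ≤ ∑ m ∈ Finset.Icc 1 L, (m : ℝ) ^ (-ρ) := by
    intro s φ hinj hmemφ
    have himg : ∑ j ∈ s, ((φ j : ℕ) : ℝ) ^ (-ρ)
        = ∑ m ∈ s.image φ, ((m : ℕ) : ℝ) ^ (-ρ) := (Finset.sum_image (f := fun m : ℕ => ((m:ℕ) : ℝ) ^ (-ρ)) hinj).symm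
    rw [himg]
    refine Finset.sum_le_sum_of_subset_of_nonneg ?_ fun m _ _ =>
      Real.rpow_nonneg (Nat.cast_nonneg m) _
    intro m hm
    obtain ⟨j, hj, rfl⟩ := Finset.mem_image.mp hm
    exact hmemφ j hj
  have hinner : ∀ i ∈ I, ∑ j ∈ I, (if i = j then σsq
        else C * σsq * ((max i j - min i j : ℕ) : ℝ) ^ (-ρ))
      ≤ σsq + C * σsq * (2 * (2 * (L : ℝ) ^ (1 - ρ) / (1 - ρ))) := by
    intro i hi
    obtain ⟨hi1, hin⟩ := hmem i hi
    rw [← Finset.add_sum_erase I _ hi, if_pos rfl]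
    have herase : ∑ j ∈ I.erase i, (if i = j then σsq
          else C * σsq * ((max i j - min i j : ℕ) : ℝ) ^ (-ρ))
        = C * σsq * ∑ j ∈ I.erase i, ((max i j - min i j : ℕ) : ℝ) ^ (-ρ) := by
      rw [Finset.mul_sum]
      refine Finset.sum_congr rfl fun j hj => ?_
      rw [if_neg (Ne.symm (Finset.mem_erase.mp hj).1)]
    rw [herase]
    have hdecomp : ∑ j ∈ I.erase i, ((max i j - min i j : ℕ) : ℝ) ^ (-ρ)
        = ∑ j ∈ (I.erase i).filter (· < i), ((max i j - min i j : ℕ) : ℝ) ^ (-ρ)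
          + ∑ j ∈ (I.erase i).filter (fun j => ¬ j < i), ((max i j - min i j : ℕ) : ℝ) ^ (-ρ) :=
      (Finset.sum_filter_add_sum_filter_not _ _ _).symm
    have hmemE : ∀ j ∈ I.erase i, a + 1 ≤ j ∧ j ≤ b ∧ j ≠ i := by
      intro j hj
      obtain ⟨hne, hjI⟩ := Finset.mem_erase.mp hj
      exact ⟨(hmem j hjI).1, (hmem j hjI).2, hne⟩
    have hlt : ∑ j ∈ (I.erase i).filter (· < i), ((max i j - min i j : ℕ) : ℝ) ^ (-ρ)
        ≤ ∑ m ∈ Finset.Icc 1 L, (m : ℝ) ^ (-ρ) := by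
      have hcg : ∑ j ∈ (I.erase i).filter (· < i), ((max i j - min i j : ℕ) : ℝ) ^ (-ρ)
          = ∑ j ∈ (I.erase i).filter (· < i), (((i - j : ℕ) : ℕ) : ℝ) ^ (-ρ) := by
        refine Finset.sum_congr rfl fun j hj => ?_
        obtain ⟨hjE, hji⟩ := Finset.mem_filter.mp hj
        have : max i j - min i j = i - j := by
          have := hmemE j hjE; omega
        rw [this]
      rw [hcg]
      refine hmaple _ (fun j => i - j) ?_ ?_
      · intro x hx y hy hxy
        obtain ⟨hxE, hxi⟩ := Finset.mem_filter.mp hx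
        obtain ⟨hyE, hyi⟩ := Finset.mem_filter.mp hy
        have hxi' : x < i := hxi
        have hyi' : y < i := hyi
        have hxy' : i - x = i - y := hxy
        omega
      · intro j hj
        obtain ⟨hjE, hji⟩ := Finset.mem_filter.mp hj
        have hji' : j < i := hji
        have h1 := hmemE j hjE
        rw [Finset.mem_Icc]
        show 1 ≤ i - j ∧ i - j ≤ L
        omega
    have hgt : ∑ j ∈ (I.erase i).filter (fun j => ¬ j < i), ((max i j - min i j : ℕ) : ℝ) ^ (-ρ)
        ≤ ∑ m ∈ Finset.Icc 1 L, (m : ℝ) ^ (-ρ) := by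
      have hcg : ∑ j ∈ (I.erase i).filter (fun j => ¬ j < i), ((max i j - min i j : ℕ) : ℝ) ^ (-ρ)
          = ∑ j ∈ (I.erase i).filter (fun j => ¬ j < i), (((j - i : ℕ) : ℕ) : ℝ) ^ (-ρ) := by
        refine Finset.sum_congr rfl fun j hj => ?_
        obtain ⟨hjE, hji⟩ := Finset.mem_filter.mp hj
        have := hmemE j hjE
        have h2 : max i j - min i j = j - i := by omega
        rw [h2]
      rw [hcg]
      refine hmaple _ (fun j => j - i) ?_ ?_
      · intro x hx y hy hxy
        obtain ⟨hxE, hxi⟩ := Finset.mem_filter.mp hx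
        obtain ⟨hyE, hyi⟩ := Finset.mem_filter.mp hy
        have hxi' : ¬ x < i := hxi
        have hyi' : ¬ y < i := hyi
        have hxy' : x - i = y - i := hxy
        have h1 := hmemE x hxE
        have h2 := hmemE y hyE
        omega
      · intro j hj
        obtain ⟨hjE, hji⟩ := Finset.mem_filter.mp hj
        have hji' : ¬ j < i := hji
        have h1 := hmemE j hjE
        rw [Finset.mem_Icc]
        show 1 ≤ j - i ∧ j - i ≤ L
        omega
    have hCσ : 0 ≤ C * σsq := mul_nonneg hC.le hσ0
    have htotal : ∑ j ∈ I.erase i, ((max i j - min i j : ℕ) : ℝ) ^ (-ρ)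
        ≤ 2 * (2 * (L : ℝ) ^ (1 - ρ) / (1 - ρ)) := by
      rw [hdecomp]
      have := hlt.trans hSB
      have := hgt.trans hSB
      linarith
    have := mul_le_mul_of_nonneg_left htotal hCσ
    linarith
  have hW : (0:ℝ) ≤ (L : ℝ) ^ (1 - ρ) := Real.rpow_nonneg hLpos.le _
  have hL2ρ : (L : ℝ) ≤ (L : ℝ) ^ ((2:ℝ) - ρ) := by
    calc (L : ℝ) = (L : ℝ) ^ (1:ℝ) := (Real.rpow_one _).symm
      _ ≤ (L : ℝ) ^ ((2:ℝ) - ρ) := Real.rpow_le_rpow_of_exponent_le hL1' (by linarith)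
  have hprod : (L : ℝ) * (L : ℝ) ^ (1 - ρ) = (L : ℝ) ^ ((2:ℝ) - ρ) := by
    have h2 := Real.rpow_add hLpos 1 (1 - ρ)
    rw [Real.rpow_one] at h2
    rw [← h2]
    congr 1
    ring
  calc ∫ ω, (∑ i ∈ I, X i ω) ^ 2 ∂ℙ
      = ∑ i ∈ I, ∑ j ∈ I, ∫ ω, X i ω * X j ω ∂ℙ := hexp
    _ ≤ ∑ i ∈ I, (σsq + C * σsq * (2 * (2 * (L : ℝ) ^ (1 - ρ) / (1 - ρ)))) := by
        refine Finset.sum_le_sum fun i hi => ?_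
        exact (Finset.sum_le_sum fun j hj => hterm i hi j hj).trans (hinner i hi)
    _ = (L : ℝ) * (σsq + C * σsq * (2 * (2 * (L : ℝ) ^ (1 - ρ) / (1 - ρ)))) := by
        rw [Finset.sum_const, hIcard, nsmul_eq_mul]
    _ ≤ (1 + 4 * C / (1 - ρ)) * σsq * ((L : ℕ) : ℝ) ^ ((2:ℝ) - ρ) := by
        have key : (L : ℝ) * (C * σsq * (2 * (2 * (L : ℝ) ^ (1 - ρ) / (1 - ρ))))
            = 4 * C / (1 - ρ) * σsq * (L : ℝ) ^ ((2:ℝ) - ρ) := by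
          rw [← hprod]; field_simp; ring
        have key2 : (L : ℝ) * σsq ≤ σsq * (L : ℝ) ^ ((2:ℝ) - ρ) := by
          rw [mul_comm]
          exact mul_le_mul_of_nonneg_left hL2ρ hσ0
        nlinarith [key, key2]

lemma moricz {Ω : Type*} [MeasurableSpace Ω] (ℙ : Measure Ω) [IsProbabilityMeasure ℙ]
    (ρ : ℝ) (hρ0 : 0 < ρ) (hρ1 : ρ < 1)
    (K σsq : ℝ) (hK : 0 < K) (hσ0 : 0 ≤ σsq)
    (s β A : ℝ) (hs0 : 0 < s) (hβ : s ^ ((2:ℝ) - ρ) = β) (hA0 : 0 ≤ A)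
    (L₀ : ℕ) (hL₀1 : 1 ≤ L₀)
    (hsplitp : ∀ L : ℕ, L₀ < L → ((L:ℝ) + 1) / 2 ≤ s * L)
    (hbase : ∀ L : ℕ, 1 ≤ L → L ≤ L₀ → (L:ℝ) * K ≤ A ^ 2)
    (hmaster : β * (A ^ 2 + (Real.sqrt K + A) ^ 2) ≤ A ^ 2)
    (n : ℕ) (X : ℕ → Ω → ℝ) (hXm : ∀ i, Measurable (X i)) (hX2 : ∀ i, MemLp (X i) 2 ℙ)
    (hseg : ∀ a b, a < b → b ≤ n →
      ∫ ω, (∑ i ∈ Finset.Ioc a b, X i ω) ^ 2 ∂ℙ ≤ K * σsq * ((b - a : ℕ) : ℝ) ^ ((2:ℝ) - ρ)) :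
    ∀ L a b (hab : a < b), b ≤ n → b - a = L →
      ∫ ω, ((Finset.Ioc a b).sup' (Finset.nonempty_Ioc.mpr hab)
          (fun k => |∑ i ∈ Finset.Ioc a k, X i ω|)) ^ 2 ∂ℙ
        ≤ A ^ 2 * σsq * ((L : ℕ) : ℝ) ^ ((2:ℝ) - ρ) := by
  have h2ρ : (0:ℝ) < 2 - ρ := by linarith
  have hSℒ : ∀ a' b', MemLp (fun ω => ∑ i ∈ Finset.Ioc a' b', X i ω) 2 ℙ := fun a' b' => by
    have h0 := memLp_finset_sum' (Finset.Ioc a' b') fun i (_ : i ∈ Finset.Ioc a' b') => hX2 i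
    have heq : (∑ i ∈ Finset.Ioc a' b', X i) = fun ω => ∑ i ∈ Finset.Ioc a' b', X i ω := by
      funext ω
      simp
    rwa [heq] at h0
  have hSm : ∀ a' b', Measurable (fun ω => ∑ i ∈ Finset.Ioc a' b', X i ω) := fun a' b' =>
    Finset.measurable_sum _ fun i _ => hXm i
  have hS2 : ∀ a' b', Integrable (fun ω => (∑ i ∈ Finset.Ioc a' b', X i ω) ^ 2) ℙ :=
    fun a' b' => (hSℒ a' b').integrable_sq
  have hMℒ : ∀ a' b' (h : a' < b'), MemLp (fun ω => (Finset.Ioc a' b').sup'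
      (Finset.nonempty_Ioc.mpr h) (fun k => |∑ i ∈ Finset.Ioc a' k, X i ω|)) 2 ℙ := by
    intro a' b' h
    exact aux_memℒp_sup' _ fun k _ => (hSℒ a' k).abs
  have hMm : ∀ a' b' (h : a' < b'), Measurable (fun ω => (Finset.Ioc a' b').sup'
      (Finset.nonempty_Ioc.mpr h) (fun k => |∑ i ∈ Finset.Ioc a' k, X i ω|)) := by
    intro a' b' h
    have h0 := Finset.measurable_sup' (f := fun k ω => |∑ i ∈ Finset.Ioc a' k, X i ω|)
      (Finset.nonempty_Ioc.mpr h) fun k _ => (hSm a' k).abs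
    have heq : ((Finset.Ioc a' b').sup' (Finset.nonempty_Ioc.mpr h)
          fun k ω => |∑ i ∈ Finset.Ioc a' k, X i ω|)
        = fun ω => (Finset.Ioc a' b').sup' (Finset.nonempty_Ioc.mpr h)
          fun k => |∑ i ∈ Finset.Ioc a' k, X i ω| := by
      funext ω
      exact Finset.sup'_apply (Finset.nonempty_Ioc.mpr h) _ ω
    rwa [heq] at h0
  intro L
  induction L using Nat.strong_induction_on with
  | _ L IH =>
  intro a b hab hbn hL
  by_cases hcase : L ≤ L₀
  · -- short intervals: crude bound
    have hL1 : 1 ≤ L := by omega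
    have hpt : ∀ ω, ((Finset.Ioc a b).sup' (Finset.nonempty_Ioc.mpr hab)
          (fun k => |∑ i ∈ Finset.Ioc a k, X i ω|)) ^ 2
        ≤ ∑ k ∈ Finset.Ioc a b, (∑ i ∈ Finset.Ioc a k, X i ω) ^ 2 := by
      intro ω
      obtain ⟨k, hk, hkeq⟩ := Finset.exists_mem_eq_sup' (Finset.nonempty_Ioc.mpr hab)
        (fun k => |∑ i ∈ Finset.Ioc a k, X i ω|)
      rw [hkeq, sq_abs]
      exact Finset.single_le_sum (f := fun k => (∑ i ∈ Finset.Ioc a k, X i ω) ^ 2)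
        (fun j _ => sq_nonneg _) hk
    have hWnn : (0:ℝ) ≤ ((L:ℕ):ℝ) ^ ((2:ℝ) - ρ) := Real.rpow_nonneg (Nat.cast_nonneg L) _
    calc ∫ ω, ((Finset.Ioc a b).sup' (Finset.nonempty_Ioc.mpr hab)
          (fun k => |∑ i ∈ Finset.Ioc a k, X i ω|)) ^ 2 ∂ℙ
        ≤ ∫ ω, ∑ k ∈ Finset.Ioc a b, (∑ i ∈ Finset.Ioc a k, X i ω) ^ 2 ∂ℙ :=
          integral_mono_of_nonneg (Eventually.of_forall fun ω => sq_nonneg _)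
            (integrable_finset_sum _ fun k _ => hS2 a k) (Eventually.of_forall hpt)
      _ = ∑ k ∈ Finset.Ioc a b, ∫ ω, (∑ i ∈ Finset.Ioc a k, X i ω) ^ 2 ∂ℙ :=
          integral_finset_sum _ fun k _ => hS2 a k
      _ ≤ ∑ _k ∈ Finset.Ioc a b, K * σsq * ((L:ℕ):ℝ) ^ ((2:ℝ) - ρ) := by
          refine Finset.sum_le_sum fun k hk => ?_
          rw [Finset.mem_Ioc] at hk
          refine (hseg a k hk.1 (le_trans hk.2 hbn)).trans ?_
          have hkL : ((k - a : ℕ):ℝ) ≤ ((L:ℕ):ℝ) := by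
            exact_mod_cast (by omega : k - a ≤ L)
          have hmono : ((k - a : ℕ):ℝ) ^ ((2:ℝ) - ρ) ≤ ((L:ℕ):ℝ) ^ ((2:ℝ) - ρ) :=
            Real.rpow_le_rpow (Nat.cast_nonneg _) hkL h2ρ.le
          have hKσ : (0:ℝ) ≤ K * σsq := mul_nonneg hK.le hσ0
          exact mul_le_mul_of_nonneg_left hmono hKσ
      _ = (L:ℝ) * (K * σsq * ((L:ℕ):ℝ) ^ ((2:ℝ) - ρ)) := by
          rw [Finset.sum_const, Nat.card_Ioc, hL, nsmul_eq_mul]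
      _ ≤ A ^ 2 * σsq * ((L:ℕ):ℝ) ^ ((2:ℝ) - ρ) := by
          have hb := hbase L hL1 hcase
          have h2' := mul_le_mul_of_nonneg_right
            (mul_le_mul_of_nonneg_right hb hσ0) hWnn
          have heq : (L:ℝ) * (K * σsq * ((L:ℕ):ℝ) ^ ((2:ℝ) - ρ))
              = (L:ℝ) * K * σsq * ((L:ℕ):ℝ) ^ ((2:ℝ) - ρ) := by ring
          linarith
  · -- bisection
    push_neg at hcase
    have hL2 : 2 ≤ L := by omega
    set h : ℕ := (L + 1) / 2 with hh
    have hh1 : 1 ≤ h := by omega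
    have hhL : h < L := by omega
    set c : ℕ := a + h with hcdef
    have hac : a < c := by omega
    have hcb : c < b := by omega
    have hcn : c ≤ n := by omega
    have hca : c - a = h := by omega
    have hbc : b - c = L - h := by omega
    have hLh1 : 1 ≤ L - h := by omega
    have hsLr : (h:ℝ) ≤ s * L := by
      have h1 := hsplitp L hcase
      have h2 : 2 * h ≤ L + 1 := by omega
      have h3 : (2:ℝ) * h ≤ (L:ℝ) + 1 := by exact_mod_cast h2
      linarith
    have hsLr' : ((L - h : ℕ):ℝ) ≤ s * L := by
      have h1 : L - h ≤ h := by omega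
      have h2 : ((L - h : ℕ):ℝ) ≤ (h:ℝ) := by exact_mod_cast h1
      linarith
    set W : ℝ := ((L:ℕ):ℝ) ^ ((2:ℝ) - ρ) with hWdef
    have hLpos : (0:ℝ) < (L:ℝ) := by exact_mod_cast (by omega : 0 < L)
    have hWpos : 0 < W := Real.rpow_pos_of_pos hLpos _
    have hbW : ∀ m : ℕ, (m:ℝ) ≤ s * L → ((m:ℕ):ℝ) ^ ((2:ℝ) - ρ) ≤ β * W := by
      intro m hm
      calc ((m:ℕ):ℝ) ^ ((2:ℝ) - ρ) ≤ (s * L) ^ ((2:ℝ) - ρ) :=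
            Real.rpow_le_rpow (Nat.cast_nonneg m) hm h2ρ.le
        _ = s ^ ((2:ℝ) - ρ) * ((L:ℕ):ℝ) ^ ((2:ℝ) - ρ) :=
            Real.mul_rpow hs0.le (Nat.cast_nonneg L)
        _ = β * W := by rw [hβ]
    set M1 : Ω → ℝ := fun ω => (Finset.Ioc a c).sup' (Finset.nonempty_Ioc.mpr hac)
      (fun k => |∑ i ∈ Finset.Ioc a k, X i ω|) with hM1def
    set M2 : Ω → ℝ := fun ω => (Finset.Ioc c b).sup' (Finset.nonempty_Ioc.mpr hcb)
      (fun k => |∑ i ∈ Finset.Ioc c k, X i ω|) with hM2def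
    set T : Ω → ℝ := fun ω => ∑ i ∈ Finset.Ioc a c, X i ω with hTdef
    have hpt : ∀ ω, ((Finset.Ioc a b).sup' (Finset.nonempty_Ioc.mpr hab)
          (fun k => |∑ i ∈ Finset.Ioc a k, X i ω|)) ^ 2
        ≤ M1 ω ^ 2 + (|T ω| + M2 ω) ^ 2 := by
      intro ω
      have hub : ((Finset.Ioc a b).sup' (Finset.nonempty_Ioc.mpr hab)
            (fun k => |∑ i ∈ Finset.Ioc a k, X i ω|))
          ≤ max (M1 ω) (|T ω| + M2 ω) := by
        apply Finset.sup'_le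
        intro k hk
        rw [Finset.mem_Ioc] at hk
        rcases le_or_gt k c with hkc | hck
        · exact le_max_of_le_left (Finset.le_sup' (fun k => |∑ i ∈ Finset.Ioc a k, X i ω|) (Finset.mem_Ioc.mpr ⟨hk.1, hkc⟩))
        · have hsum : ∑ i ∈ Finset.Ioc a k, X i ω = T ω + ∑ i ∈ Finset.Ioc c k, X i ω := by
            rw [hTdef]
            exact (Finset.sum_Ioc_consecutive _ (le_of_lt hac) (le_of_lt hck)).symm
          refine le_max_of_le_right ?_
          rw [hsum]
          refine (abs_add_le _ _).trans ?_
          have hle : |∑ i ∈ Finset.Ioc c k, X i ω| ≤ M2 ω :=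
            Finset.le_sup' (fun k => |∑ i ∈ Finset.Ioc c k, X i ω|) (Finset.mem_Ioc.mpr ⟨hck, hk.2⟩)
          linarith
      have hnn : 0 ≤ (Finset.Ioc a b).sup' (Finset.nonempty_Ioc.mpr hab)
          (fun k => |∑ i ∈ Finset.Ioc a k, X i ω|) :=
        le_trans (abs_nonneg _) (Finset.le_sup' (fun k => |∑ i ∈ Finset.Ioc a k, X i ω|) (Finset.mem_Ioc.mpr ⟨hab, le_refl b⟩))
      have hsq := pow_le_pow_left₀ hnn hub 2
      rcases max_cases (M1 ω) (|T ω| + M2 ω) with ⟨hmeq, _⟩ | ⟨hmeq, _⟩ <;>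
        rw [hmeq] at hsq <;>
        nlinarith [sq_nonneg (M1 ω), sq_nonneg (|T ω| + M2 ω)]
    have hM1ℒ : MemLp M1 2 ℙ := hMℒ a c hac
    have hM2ℒ : MemLp M2 2 ℙ := hMℒ c b hcb
    have hTℒ : MemLp T 2 ℙ := hSℒ a c
    have hRℒ : MemLp (fun ω => |T ω| + M2 ω) 2 ℙ := hTℒ.abs.add hM2ℒ
    have hM1sq : Integrable (fun ω => M1 ω ^ 2) ℙ := hM1ℒ.integrable_sq
    have hM2sq : Integrable (fun ω => M2 ω ^ 2) ℙ := hM2ℒ.integrable_sq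
    have hRsq : Integrable (fun ω => (|T ω| + M2 ω) ^ 2) ℙ := hRℒ.integrable_sq
    have hTabs2 : Integrable (fun ω => |T ω| ^ 2) ℙ := by
      have heq : (fun ω => |T ω| ^ 2) = fun ω => T ω ^ 2 := by
        funext ω; rw [sq_abs]
      rw [heq]; exact hTℒ.integrable_sq
    have hstep1 : ∫ ω, ((Finset.Ioc a b).sup' (Finset.nonempty_Ioc.mpr hab)
          (fun k => |∑ i ∈ Finset.Ioc a k, X i ω|)) ^ 2 ∂ℙ
        ≤ ∫ ω, M1 ω ^ 2 ∂ℙ + ∫ ω, (|T ω| + M2 ω) ^ 2 ∂ℙ := by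
      rw [← integral_add hM1sq hRsq]
      exact integral_mono_of_nonneg (Eventually.of_forall fun ω => sq_nonneg _)
        (hM1sq.add hRsq) (Eventually.of_forall hpt)
    have hM2m : Measurable M2 := hMm c b hcb
    have hTm : Measurable T := hSm a c
    have hmul : Integrable (fun ω => |T ω| * M2 ω) ℙ :=
      aux_integrable_mul hTm.abs.aestronglyMeasurable hM2m.aestronglyMeasurable hTabs2 hM2sq
    have hexpand : ∫ ω, (|T ω| + M2 ω) ^ 2 ∂ℙ
        = ∫ ω, T ω ^ 2 ∂ℙ + (2 * ∫ ω, |T ω| * M2 ω ∂ℙ + ∫ ω, M2 ω ^ 2 ∂ℙ) := by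
      have h1 : (fun ω => (|T ω| + M2 ω) ^ 2)
          = fun ω => T ω ^ 2 + (2 * (|T ω| * M2 ω) + M2 ω ^ 2) := by
        funext ω
        rw [add_sq, sq_abs]
        ring
      have i2 : Integrable (fun ω => 2 * (|T ω| * M2 ω)) ℙ := hmul.const_mul 2
      have i3 : Integrable (fun ω => 2 * (|T ω| * M2 ω) + M2 ω ^ 2) ℙ := i2.add hM2sq
      rw [h1, integral_add (hTℒ.integrable_sq) i3, integral_add i2 hM2sq, integral_const_mul]
    have hcs : ∫ ω, |T ω| * M2 ω ∂ℙ
        ≤ Real.sqrt (∫ ω, T ω ^ 2 ∂ℙ) * Real.sqrt (∫ ω, M2 ω ^ 2 ∂ℙ) := by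
      have hcs0 := aux_cs hTm.abs.aestronglyMeasurable hM2m.aestronglyMeasurable hTabs2 hM2sq
      simp only [sq_abs] at hcs0
      exact hcs0
    set Q : ℝ := σsq * (β * W) with hQdef
    have hβ0 : 0 < β := by rw [← hβ]; positivity
    have hQnn : 0 ≤ Q := mul_nonneg hσ0 (by positivity)
    have hTb : ∫ ω, T ω ^ 2 ∂ℙ ≤ K * Q := by
      have h1 := hseg a c hac hcn
      rw [hca] at h1
      refine h1.trans ?_
      have h2 := hbW h hsLr
      have hKσ : (0:ℝ) ≤ K * σsq := mul_nonneg hK.le hσ0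
      have h3 := mul_le_mul_of_nonneg_left h2 hKσ
      have heq : K * σsq * (β * W) = K * Q := by rw [hQdef]; ring
      linarith
    have hM1b : ∫ ω, M1 ω ^ 2 ∂ℙ ≤ A ^ 2 * Q := by
      have h1 := IH h hhL a c hac hcn hca
      refine h1.trans ?_
      have h2 := hbW h hsLr
      have hA2σ : (0:ℝ) ≤ A ^ 2 * σsq := mul_nonneg (sq_nonneg A) hσ0
      have h3 := mul_le_mul_of_nonneg_left h2 hA2σ
      have heq : A ^ 2 * σsq * (β * W) = A ^ 2 * Q := by rw [hQdef]; ring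
      linarith
    have hM2b : ∫ ω, M2 ω ^ 2 ∂ℙ ≤ A ^ 2 * Q := by
      have h1 := IH (L - h) (by omega) c b hcb hbn hbc
      refine h1.trans ?_
      have h2 := hbW (L - h) hsLr'
      have hA2σ : (0:ℝ) ≤ A ^ 2 * σsq := mul_nonneg (sq_nonneg A) hσ0
      have h3 := mul_le_mul_of_nonneg_left h2 hA2σ
      have heq : A ^ 2 * σsq * (β * W) = A ^ 2 * Q := by rw [hQdef]; ring
      linarith
    have hcross : ∫ ω, |T ω| * M2 ω ∂ℙ ≤ Real.sqrt K * A * Q := by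
      refine hcs.trans ?_
      have hM2nn' : 0 ≤ ∫ ω, M2 ω ^ 2 ∂ℙ := integral_nonneg fun ω => sq_nonneg _
      have h1 : Real.sqrt (∫ ω, T ω ^ 2 ∂ℙ) ≤ Real.sqrt (K * Q) := Real.sqrt_le_sqrt hTb
      have h2 : Real.sqrt (∫ ω, M2 ω ^ 2 ∂ℙ) ≤ Real.sqrt (A ^ 2 * Q) := Real.sqrt_le_sqrt hM2b
      have h3 : Real.sqrt (K * Q) = Real.sqrt K * Real.sqrt Q := Real.sqrt_mul hK.le _
      have h4 : Real.sqrt (A ^ 2 * Q) = A * Real.sqrt Q := by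
        rw [Real.sqrt_mul (sq_nonneg A), Real.sqrt_sq hA0]
      have h5 : Real.sqrt Q * Real.sqrt Q = Q := Real.mul_self_sqrt hQnn
      calc Real.sqrt (∫ ω, T ω ^ 2 ∂ℙ) * Real.sqrt (∫ ω, M2 ω ^ 2 ∂ℙ)
          ≤ Real.sqrt (K * Q) * Real.sqrt (A ^ 2 * Q) :=
            mul_le_mul h1 h2 (Real.sqrt_nonneg _) (Real.sqrt_nonneg _)
        _ = Real.sqrt K * A * (Real.sqrt Q * Real.sqrt Q) := by rw [h3, h4]; ring
        _ = Real.sqrt K * A * Q := by rw [h5]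
    have hsqK : Real.sqrt K ^ 2 = K := Real.sq_sqrt hK.le
    have h7 : (Real.sqrt K + A) ^ 2 = K + 2 * Real.sqrt K * A + A ^ 2 := by
      rw [add_sq, hsqK]
    have h6 : A ^ 2 * Q + (K * Q + (2 * (Real.sqrt K * A * Q) + A ^ 2 * Q))
        = β * (A ^ 2 + (Real.sqrt K + A) ^ 2) * (σsq * W) := by
      rw [h7, hQdef]; ring
    have h8 : β * (A ^ 2 + (Real.sqrt K + A) ^ 2) * (σsq * W) ≤ A ^ 2 * (σsq * W) :=
      mul_le_mul_of_nonneg_right hmaster (mul_nonneg hσ0 hWpos.le)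
    have h9 : A ^ 2 * (σsq * W) = A ^ 2 * σsq * W := by ring
    have hcross2 := mul_le_mul_of_nonneg_left hcross (by norm_num : (0:ℝ) ≤ 2)
    linarith [hstep1, hexpand, hTb, hM1b, hM2b]

/-- Covariance of two real random variables. -/
noncomputable def covar {Ω : Type*} [MeasurableSpace Ω] (μ : Measure Ω) (Y Z : Ω → ℝ) : ℝ :=
  ∫ ω, (Y ω - ∫ ω', Y ω' ∂μ) * (Z ω - ∫ ω', Z ω' ∂μ) ∂μ

/-- Variance of a real random variable. -/
noncomputable def variance' {Ω : Type*} [MeasurableSpace Ω] (μ : Measure Ω) (Y : Ω → ℝ) : ℝ :=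
  covar μ Y Y

/-- **Lemma 1** (maximal inequality): if the correlations of the square-integrable
sequence `(Y_i)_{1≤i≤n}` decay like `C m^{-ρ}` with `0 < ρ < 1`, and `E[Y_i²] ≤ σ²`,
then `E[(max_{1≤k≤n} |Σ_{i=1}^k (Y_i − E Y_i)|)²] ≤ D(ρ)² σ² n^{2−ρ}` for a constant
`D(ρ) > 0` depending only on `ρ` and `C`. -/
theorem maximal_inequality_polynomial_decay (C ρ : ℝ) (hC : 0 < C) (hρ0 : 0 < ρ) (hρ1 : ρ < 1) :
    ∃ D : ℝ, 0 < D ∧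
      ∀ (Ω : Type*) [MeasurableSpace Ω] (ℙ : Measure Ω) [IsProbabilityMeasure ℙ]
        (n : ℕ) (hn : 1 ≤ n) (Y : ℕ → Ω → ℝ),
        (∀ i, Measurable (Y i)) →
        (∀ i, MemLp (Y i) 2 ℙ) →
        -- the correlation (covariance) decay assumption
        (∀ i m : ℕ, 1 ≤ i → 1 ≤ m → i + m ≤ n →
          |covar ℙ (Y i) (Y (i + m))| ≤ C * (m : ℝ) ^ (-ρ) *
            Real.sqrt (variance' ℙ (Y i)) * Real.sqrt (variance' ℙ (Y (i + m)))) →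
        ∀ σsq : ℝ,
        -- the second-moment bound `E[Y_i²] ≤ σ²`
        (∀ i, 1 ≤ i → i ≤ n → ∫ ω, (Y i ω) ^ 2 ∂ℙ ≤ σsq) →
        ∫ ω, ((Finset.Icc 1 n).sup' (Finset.nonempty_Icc.mpr hn)
            (fun k => |∑ i ∈ Finset.Icc 1 k, (Y i ω - ∫ ω', Y i ω' ∂ℙ)|)) ^ 2 ∂ℙ ≤
          D ^ 2 * σsq * (n : ℝ) ^ ((2 : ℝ) - ρ) := by
  have h1ρ : (0:ℝ) < 1 - ρ := by linarith
  have h2ρ : (0:ℝ) < 2 - ρ := by linarith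
  -- constants depending only on C and ρ
  set K : ℝ := 1 + 4 * C / (1 - ρ) with hKdef
  have hK : 0 < K := by positivity
  set s : ℝ := (2:ℝ) ^ ((ρ - 3) / (2 * (2 - ρ))) with hsdef
  have hs0 : 0 < s := Real.rpow_pos_of_pos (by norm_num) _
  have hs_half : 1/2 < s := by
    have h1 : (1/2 : ℝ) = (2:ℝ) ^ (-1 : ℝ) := by
      rw [Real.rpow_neg_one]; norm_num
    rw [hsdef, h1]
    apply (Real.rpow_lt_rpow_left_iff (by norm_num : (1:ℝ) < 2)).mpr
    rw [lt_div_iff₀ (by linarith : (0:ℝ) < 2 * (2 - ρ))]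
    nlinarith
  set β : ℝ := s ^ ((2:ℝ) - ρ) with hβdef
  have hβ0 : 0 < β := Real.rpow_pos_of_pos hs0 _
  have hβval : β = (2:ℝ) ^ (((ρ : ℝ) - 3) / 2) := by
    rw [hβdef, hsdef, ← Real.rpow_mul (by norm_num : (0:ℝ) ≤ 2)]
    congr 1
    field_simp
  have hθval : 2 * β = (2:ℝ) ^ (((ρ : ℝ) - 1) / 2) := by
    rw [hβval]
    have h2 : (2:ℝ) * (2:ℝ) ^ (((ρ : ℝ) - 3) / 2)
        = (2:ℝ) ^ (1 + ((ρ : ℝ) - 3) / 2) := by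
      rw [Real.rpow_add (by norm_num : (0:ℝ) < 2), Real.rpow_one]
    rw [h2]
    congr 1
    ring
  have hθ1 : 2 * β < 1 := by
    rw [hθval]
    exact Real.rpow_lt_one_of_one_lt_of_neg (by norm_num) (by linarith)
  set L₀ : ℕ := ⌈1/(2*s-1)⌉₊ + 2 with hL₀def
  have hL₀1 : 1 ≤ L₀ := by omega
  have h2s : (0:ℝ) < 2*s - 1 := by linarith
  have hsplitp : ∀ L : ℕ, L₀ < L → ((L:ℝ) + 1) / 2 ≤ s * L := by
    intro L hL
    have hceil : 1/(2*s-1) ≤ (⌈1/(2*s-1)⌉₊ : ℝ) := Nat.le_ceil _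
    have hcL : ((⌈1/(2*s-1)⌉₊ : ℕ) : ℝ) ≤ (L:ℝ) := by
      exact_mod_cast (by omega : ⌈1/(2*s-1)⌉₊ ≤ L)
    have h1 : 1/(2*s-1) ≤ (L:ℝ) := le_trans hceil hcL
    rw [div_le_iff₀ h2s] at h1
    nlinarith
  set t : ℝ := 2/(1 - 2*β) + (L₀ : ℕ) with htdef
  have h1θ : (0:ℝ) < 1 - 2*β := by linarith
  have htL₀ : ((L₀:ℕ):ℝ) ≤ t := by
    rw [htdef]
    have : (0:ℝ) ≤ 2/(1 - 2*β) := by positivity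
    linarith
  have ht2 : (2:ℝ) ≤ t := by
    have hL₀2 : (2:ℝ) ≤ ((L₀:ℕ):ℝ) := by exact_mod_cast (by omega : 2 ≤ L₀)
    linarith
  have htθ : 2 ≤ t * (1 - 2*β) := by
    have h1 : 2/(1 - 2*β) ≤ t := by
      have : (0:ℝ) ≤ ((L₀:ℕ):ℝ) := Nat.cast_nonneg _
      rw [htdef]; linarith
    calc (2:ℝ) = 2/(1 - 2*β) * (1 - 2*β) := by field_simp
      _ ≤ t * (1 - 2*β) := mul_le_mul_of_nonneg_right h1 h1θ.le
  set A : ℝ := Real.sqrt K * t with hAdef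
  have hsqK : Real.sqrt K ^ 2 = K := Real.sq_sqrt hK.le
  have hsqK0 : 0 < Real.sqrt K := Real.sqrt_pos.mpr hK
  have hApos : 0 < A := mul_pos hsqK0 (by linarith)
  have hA2 : A ^ 2 = K * t ^ 2 := by rw [hAdef, mul_pow, hsqK]
  have hbase : ∀ L : ℕ, 1 ≤ L → L ≤ L₀ → (L:ℝ) * K ≤ A ^ 2 := by
    intro L hL1 hLL₀
    rw [hA2]
    have h1 : (L:ℝ) ≤ ((L₀:ℕ):ℝ) := by exact_mod_cast hLL₀
    have h2 : (L:ℝ) ≤ t := h1.trans htL₀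
    have h3 : t ≤ t ^ 2 := by nlinarith
    have h4 : (L:ℝ) * K ≤ t * K := mul_le_mul_of_nonneg_right h2 hK.le
    have h5 : t * K ≤ t ^ 2 * K := mul_le_mul_of_nonneg_right h3 hK.le
    linarith
  have hmaster : β * (A ^ 2 + (Real.sqrt K + A) ^ 2) ≤ A ^ 2 := by
    have hkey : β * (t ^ 2 + (1 + t) ^ 2) ≤ t ^ 2 := by
      nlinarith [mul_nonneg (by linarith : (0:ℝ) ≤ t)
          (by linarith : (0:ℝ) ≤ t * (1 - 2*β) - 2),
        mul_nonneg (by linarith : (0:ℝ) ≤ t) (by linarith : (0:ℝ) ≤ 1 - 2*β)]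
    have hexp : β * (A ^ 2 + (Real.sqrt K + A) ^ 2) = K * (β * (t ^ 2 + (1 + t) ^ 2)) := by
      rw [hAdef]
      nlinarith [hsqK]
    rw [hexp, hA2]
    exact mul_le_mul_of_nonneg_left hkey hK.le
  refine ⟨A, hApos, ?_⟩
  intro Ω _ ℙ _ n hn Y hmeas hL2 hcov σsq hσ
  -- centered variables
  set X : ℕ → Ω → ℝ := fun i ω => Y i ω - ∫ ω', Y i ω' ∂ℙ with hXdef
  have hXm : ∀ i, Measurable (X i) := fun i => (hmeas i).sub measurable_const
  have hXℒ : ∀ i, MemLp (X i) 2 ℙ := fun i => (hL2 i).sub (memLp_const _)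
  have hσ0 : 0 ≤ σsq := le_trans (integral_nonneg fun ω => sq_nonneg _) (hσ 1 le_rfl hn)
  have hcovar_eq : ∀ i j, covar ℙ (Y i) (Y j) = ∫ ω, X i ω * X j ω ∂ℙ := fun i j => rfl
  have hvar : ∀ i, 1 ≤ i → i ≤ n → ∫ ω, X i ω ^ 2 ∂ℙ ≤ σsq := by
    intro i h1 h2
    have hYint : Integrable (Y i) ℙ := (hL2 i).integrable one_le_two
    have hY2 : Integrable (fun ω => Y i ω ^ 2) ℙ := (hL2 i).integrable_sq
    set m : ℝ := ∫ ω', Y i ω' ∂ℙ with hmdef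
    have hexpand : (fun ω => X i ω ^ 2)
        = fun ω => Y i ω ^ 2 - (2 * m * Y i ω - m ^ 2) := by
      funext ω
      simp only [hXdef]
      ring
    have hint1 : Integrable (fun ω => 2 * m * Y i ω) ℙ := hYint.const_mul _
    have hint2 : Integrable (fun ω => 2 * m * Y i ω - m ^ 2) ℙ :=
      hint1.sub (integrable_const _)
    rw [hexpand, integral_sub hY2 hint2, integral_sub hint1 (integrable_const _),
        integral_const_mul, integral_const]
    simp only [measure_univ, probReal_univ, ENNReal.toReal_one, smul_eq_mul, one_mul]
    have h3 := hσ i h1 h2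
    nlinarith [sq_nonneg m]
  have hvar' : ∀ i, 1 ≤ i → i ≤ n → variance' ℙ (Y i) ≤ σsq := by
    intro i h1 h2
    have heq : variance' ℙ (Y i) = ∫ ω, X i ω ^ 2 ∂ℙ := by
      rw [variance', hcovar_eq]
      congr 1
      funext ω
      ring
    rw [heq]
    exact hvar i h1 h2
  have hcv : ∀ i j, 1 ≤ i → i < j → j ≤ n →
      |∫ ω, X i ω * X j ω ∂ℙ| ≤ C * σsq * ((j - i : ℕ) : ℝ) ^ (-ρ) := by
    intro i j h1 hij hjn
    have hm : 1 ≤ j - i := by omega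
    have h := hcov i (j - i) h1 hm (by omega)
    rw [show i + (j - i) = j from by omega] at h
    rw [← hcovar_eq]
    refine h.trans ?_
    have hmρ : (0:ℝ) ≤ ((j - i:ℕ):ℝ) ^ (-ρ) := Real.rpow_nonneg (Nat.cast_nonneg _) _
    have hvi := hvar' i h1 (by omega)
    have hvj := hvar' j (by omega) hjn
    have h1' : Real.sqrt (variance' ℙ (Y i)) ≤ Real.sqrt σsq := Real.sqrt_le_sqrt hvi
    have h2' : Real.sqrt (variance' ℙ (Y j)) ≤ Real.sqrt σsq := Real.sqrt_le_sqrt hvj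
    have hCρ : (0:ℝ) ≤ C * ((j - i:ℕ):ℝ) ^ (-ρ) := mul_nonneg hC.le hmρ
    calc C * ((j - i:ℕ):ℝ) ^ (-ρ) * Real.sqrt (variance' ℙ (Y i))
          * Real.sqrt (variance' ℙ (Y j))
        ≤ C * ((j - i:ℕ):ℝ) ^ (-ρ) * Real.sqrt σsq * Real.sqrt σsq := by
          apply mul_le_mul (mul_le_mul_of_nonneg_left h1' hCρ) h2'
            (Real.sqrt_nonneg _) ?_
          positivity
      _ = C * σsq * ((j - i:ℕ):ℝ) ^ (-ρ) := by
          rw [mul_assoc (C * ((j - i:ℕ):ℝ) ^ (-ρ)), Real.mul_self_sqrt hσ0]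
          ring
  have hseg := seg_bound ℙ C ρ σsq hC hρ0 hρ1 hσ0 n X hXm
    (fun i => (hXℒ i).integrable_sq) hvar hcv
  have hmain := moricz ℙ ρ hρ0 hρ1 K σsq hK hσ0 s β A hs0 hβdef.symm hApos.le
    L₀ hL₀1 hsplitp hbase hmaster n X hXm hXℒ hseg n 0 n hn (le_refl n) (Nat.sub_zero n)
  have hgoal_eq : (fun ω => ((Finset.Icc 1 n).sup' (Finset.nonempty_Icc.mpr hn)
        (fun k => |∑ i ∈ Finset.Icc 1 k, (Y i ω - ∫ ω', Y i ω' ∂ℙ)|)) ^ 2)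
      = fun ω => ((Finset.Ioc 0 n).sup' (Finset.nonempty_Ioc.mpr hn)
        (fun k => |∑ i ∈ Finset.Ioc 0 k, X i ω|)) ^ 2 := by
    funext ω
    have hIcc : Finset.Icc 1 n = Finset.Ioc 0 n := by
      ext x
      simp only [Finset.mem_Icc, Finset.mem_Ioc]
      omega
    have hfun : ∀ k ∈ Finset.Icc 1 n,
        |∑ i ∈ Finset.Icc 1 k, (Y i ω - ∫ ω', Y i ω' ∂ℙ)|
          = |∑ i ∈ Finset.Ioc 0 k, X i ω| := by
      intro k hk
      have hIcck : Finset.Icc 1 k = Finset.Ioc 0 k := by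
        ext x
        simp only [Finset.mem_Icc, Finset.mem_Ioc]
        omega
      rw [hIcck]
    exact congrArg (· ^ 2) (Finset.sup'_congr (Finset.nonempty_Icc.mpr hn) hIcc hfun)
  rw [hgoal_eq]
  exact hmain
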